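/- arXiv:2605.17001 — 4 statements merged into one kernel-verified Lean document; each statement's English description precedes it below -/
import Mathlib

section
/- In the matrix setup below, at every (s, t) where G(s, t) is invertible, writing H := H₁ + t·H₂, the following second-derivative identities hold: (1) ∂²_{ss} P(s, t) = ∂²_{st} Q(s, t) = Tr(G⁻¹ H · (G⁻¹ Z)²); (2) ∂²_{st} P(s, t) = ∂²_{tt} Q(s, t) = −(1/2)·Tr(G⁻¹ Z · G⁻¹ H₂) + Tr(G⁻¹ Z · (G⁻¹ H)²); (3) ∂²_{tt} P(s, t) = −(3/2)·Tr(G⁻¹ H · G⁻¹ H₂) + Tr((G⁻¹ H)³); (4) ∂²_{ss} Q(s, t) = Tr((G⁻¹ Z)³), where G = G(s,t). -/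
open Matrix

namespace Stmt3Aux
variable {n : ℕ}
attribute [local instance] Matrix.linftyOpNormedRing Matrix.linftyOpNormedAlgebra

local notation "M" => Matrix (Fin n) (Fin n) ℝ

lemma matInv_hasDerivAt {c : ℝ → M} {c' : M} {x : ℝ}
    (hc : HasDerivAt c c' x) (hu : IsUnit (c x)) :
    HasDerivAt (fun y => (c y)⁻¹) (-((c x)⁻¹ * c' * (c x)⁻¹)) x := by
  obtain ⟨u, hu'⟩ := hu
  have hi := hasFDerivAt_ringInverse (𝕜 := ℝ) u
  rw [hu'] at hi
  have h := hi.comp_hasDerivAt x hc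
  simp only [Function.comp_def, ← Matrix.nonsing_inv_eq_ringInverse,
    ContinuousLinearMap.neg_apply, ContinuousLinearMap.mulLeftRight_apply,
    Matrix.coe_units_inv, hu'] at h
  exact h

lemma matTrace_hasDerivAt {F : ℝ → M} {F' : M} {x : ℝ} (h : HasDerivAt F F' x) :
    HasDerivAt (fun y => (F y).trace) F'.trace x := by
  have := ((Matrix.traceLinearMap (Fin n) ℝ ℝ).toContinuousLinearMap).hasFDerivAt.comp_hasDerivAt x h
  exact this

lemma hasDerivAt_G_s (A Z H₁ H₂ : M) (t x : ℝ) :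
    HasDerivAt (fun s' : ℝ => A + s' • Z + t • H₁ + (t ^ 2 / 2) • H₂) Z x := by
  have h : HasDerivAt (fun s' : ℝ => s' • Z) ((1 : ℝ) • Z) x := (hasDerivAt_id x).smul_const Z
  simp only [one_smul] at h
  exact ((h.const_add A).add_const _).add_const _

lemma hasDerivAt_G_t (A Z H₁ H₂ : M) (s x : ℝ) :
    HasDerivAt (fun t' : ℝ => A + s • Z + t' • H₁ + (t' ^ 2 / 2) • H₂) (H₁ + x • H₂) x := by
  have h1 : HasDerivAt (fun t' : ℝ => t' • H₁) ((1 : ℝ) • H₁) x := (hasDerivAt_id x).smul_const H₁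
  have h2 : HasDerivAt (fun t' : ℝ => (t' ^ 2 / 2) • H₂) ((2 * x ^ 1 / 2) • H₂) x :=
    ((hasDerivAt_pow 2 x).div_const 2).smul_const H₂
  have h3 := (h1.const_add (A + s • Z)).add h2
  simp only [one_smul, pow_one] at h3
  rw [show 2 * x / 2 = x by ring] at h3
  exact h3

lemma eventually_isUnit {c : ℝ → M} (hc : Continuous c) {x : ℝ} (hu : IsUnit (c x)) :
    ∀ᶠ y in nhds x, IsUnit (c y) := by
  have hd : Continuous fun y => (c y).det := hc.matrix_det
  have hne : (c x).det ≠ 0 := by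
    simpa [isUnit_iff_ne_zero] using (Matrix.isUnit_iff_isUnit_det _).mp hu
  filter_upwards [hd.continuousAt.eventually_ne hne] with y hy
  exact (Matrix.isUnit_iff_isUnit_det _).mpr (isUnit_iff_ne_zero.mpr hy)



lemma c4 (x1 x2 x3 x4 : M) : (x1*(x2*(x3*x4))).trace = (x3*(x4*(x1*x2))).trace := by
  rw [show x1*(x2*(x3*x4)) = (x1*x2)*(x3*x4) by simp [mul_assoc], Matrix.trace_mul_comm]
  simp [mul_assoc]

lemma c6 (x1 x2 x3 x4 x5 x6 : M) :
    (x1*(x2*(x3*(x4*(x5*x6))))).trace = (x3*(x4*(x5*(x6*(x1*x2))))).trace := by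
  rw [show x1*(x2*(x3*(x4*(x5*x6)))) = (x1*x2)*(x3*(x4*(x5*x6))) by simp [mul_assoc],
    Matrix.trace_mul_comm]
  simp [mul_assoc]

lemma key1 (a z h : M) :
    1 / 2 * ((-((-(a*z*a)) * z * a + a * z * (-(a*z*a)))) * h).trace = (a*h*(a*z)^2).trace := by
  simp only [neg_mul, mul_neg, add_mul, neg_add_rev, neg_neg, Matrix.trace_add, Matrix.trace_neg,
    mul_assoc, pow_succ, pow_zero, one_mul, Matrix.one_mul]
  rw [c6 a h a z a z]
  ring

lemma key2 (a z h : M) :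
    1 / 2 * ((-((-(a*z*a)) * h * a + a * h * (-(a*z*a)))) * z).trace = (a*h*(a*z)^2).trace := by
  simp only [neg_mul, mul_neg, add_mul, neg_add_rev, neg_neg, Matrix.trace_add, Matrix.trace_neg,
    mul_assoc, pow_succ, pow_zero, one_mul, Matrix.one_mul]
  rw [c6 a z a h a z]
  ring

lemma key3 (a z h k : M) :
    1 / 2 * ((-((-(a*z*a)) * h * a + a * h * (-(a*z*a)))) * h + (-(a*z*a)) * k).trace =
      -(1 / 2) * (a*z*(a*k)).trace + (a*z*(a*h)^2).trace := by
  simp only [neg_mul, mul_neg, add_mul, neg_add_rev, neg_neg, Matrix.trace_add, Matrix.trace_neg,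
    mul_assoc, pow_succ, pow_zero, one_mul, Matrix.one_mul]
  rw [c6 a h a z a h]
  ring

lemma key4 (a z h k : M) :
    1 / 2 * ((-(((-(a*h*a)) * h + a * k) * a + a * h * (-(a*h*a)))) * z).trace =
      -(1 / 2) * (a*z*(a*k)).trace + (a*z*(a*h)^2).trace := by
  simp only [neg_mul, mul_neg, add_mul, neg_add_rev, neg_neg, Matrix.trace_add, Matrix.trace_neg,
    mul_assoc, pow_succ, pow_zero, one_mul, Matrix.one_mul]
  rw [c6 a h a h a z, c6 a h a z a h, c4 a k a z]
  ring

lemma key5 (a h k : M) :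
    1 / 2 * ((-(((-(a*h*a)) * h + a * k) * a + a * h * (-(a*h*a)))) * h
        + (-(a*h*a)) * k + (-(a*h*a)) * k).trace =
      -(3 / 2) * (a*h*(a*k)).trace + ((a*h)^3).trace := by
  simp only [neg_mul, mul_neg, add_mul, neg_add_rev, neg_neg, Matrix.trace_add, Matrix.trace_neg,
    mul_assoc, pow_succ, pow_zero, one_mul, Matrix.one_mul]
  rw [c4 a k a h]
  ring

lemma key6 (a z : M) :
    1 / 2 * ((-((-(a*z*a)) * z * a + a * z * (-(a*z*a)))) * z).trace = ((a*z)^3).trace := by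
  simp only [neg_mul, mul_neg, add_mul, neg_add_rev, neg_neg, Matrix.trace_add, Matrix.trace_neg,
    mul_assoc, pow_succ, pow_zero, one_mul, Matrix.one_mul]
  ring

end Stmt3Aux

attribute [local instance] Matrix.linftyOpNormedRing Matrix.linftyOpNormedAlgebra

/-- Second-derivative identities for the trace quantities `Q` and `P` along the
two-parameter family of matrices `G(s,t) = A + s·Z + t·H₁ + (t²/2)·H₂`. -/
theorem stmt_3 {n : ℕ} (hn : 1 ≤ n)
    (A Z H₁ H₂ : Matrix (Fin n) (Fin n) ℝ)
    (hA : A.IsSymm) (hZ : Z.IsSymm) (hH₁ : H₁.IsSymm) (hH₂ : H₂.IsSymm)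
    (hApd : A.PosDef) (q f₁ f₂ : ℝ)
    (G : ℝ → ℝ → Matrix (Fin n) (Fin n) ℝ)
    (hG : ∀ s t, G s t = A + s • Z + t • H₁ + (t ^ 2 / 2) • H₂)
    (Q P : ℝ → ℝ → ℝ)
    (hQ : ∀ s t, Q s t = (1 / 2) * ((G s t)⁻¹ * Z).trace - q)
    (hP : ∀ s t, P s t = (1 / 2) * ((G s t)⁻¹ * (H₁ + t • H₂)).trace - (f₁ + t * f₂))
    (s t : ℝ) (hinv : IsUnit (G s t)) :
    (deriv (fun s' => deriv (fun s'' => P s'' t) s') s =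
        ((G s t)⁻¹ * (H₁ + t • H₂) * ((G s t)⁻¹ * Z) ^ 2).trace ∧
      deriv (fun s' => deriv (fun t' => Q s' t') t) s =
        ((G s t)⁻¹ * (H₁ + t • H₂) * ((G s t)⁻¹ * Z) ^ 2).trace) ∧
    (deriv (fun s' => deriv (fun t' => P s' t') t) s =
        -(1 / 2) * ((G s t)⁻¹ * Z * ((G s t)⁻¹ * H₂)).trace +
          ((G s t)⁻¹ * Z * ((G s t)⁻¹ * (H₁ + t • H₂)) ^ 2).trace ∧
      deriv (fun t' => deriv (fun t'' => Q s t'') t') t =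
        -(1 / 2) * ((G s t)⁻¹ * Z * ((G s t)⁻¹ * H₂)).trace +
          ((G s t)⁻¹ * Z * ((G s t)⁻¹ * (H₁ + t • H₂)) ^ 2).trace) ∧
    deriv (fun t' => deriv (fun t'' => P s t'') t') t =
        -(3 / 2) * ((G s t)⁻¹ * (H₁ + t • H₂) * ((G s t)⁻¹ * H₂)).trace +
          (((G s t)⁻¹ * (H₁ + t • H₂)) ^ 3).trace ∧
    deriv (fun s' => deriv (fun s'' => Q s'' t) s') s = (((G s t)⁻¹ * Z) ^ 3).trace := by
  -- derivatives of G
  have hGs : ∀ (t' x : ℝ), HasDerivAt (fun s' => G s' t') Z x := by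
    intro t' x; simp only [hG]; exact Stmt3Aux.hasDerivAt_G_s A Z H₁ H₂ t' x
  have hGt : ∀ (s' x : ℝ), HasDerivAt (fun t' => G s' t') (H₁ + x • H₂) x := by
    intro s' x; simp only [hG]; exact Stmt3Aux.hasDerivAt_G_t A Z H₁ H₂ s' x
  have hGconts : Continuous fun s' => G s' t := by
    simp only [hG]; fun_prop
  have hGcontt : Continuous fun t' => G s t' := by
    simp only [hG]; fun_prop
  have hevs : ∀ᶠ s' in nhds s, IsUnit (G s' t) := Stmt3Aux.eventually_isUnit hGconts hinv
  have hevt : ∀ᶠ t' in nhds t, IsUnit (G s t') := Stmt3Aux.eventually_isUnit hGcontt hinv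
  have hfH : ∀ t' : ℝ, HasDerivAt (fun t'' : ℝ => H₁ + t'' • H₂) H₂ t' := fun t' => by
    have h := ((hasDerivAt_id t').smul_const H₂).const_add H₁
    simp only [one_smul] at h
    exact h
  have hff : ∀ t' : ℝ, HasDerivAt (fun t'' : ℝ => f₁ + t'' * f₂) f₂ t' := fun t' => by
    simpa using ((hasDerivAt_id t').mul_const f₂).const_add f₁
  -- first (inner) derivatives
  have DQs : ∀ x : ℝ, IsUnit (G x t) →
      HasDerivAt (fun s'' => Q s'' t)
        (1 / 2 * ((-((G x t)⁻¹ * Z * (G x t)⁻¹)) * Z).trace) x := by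
    intro x hx
    have invd := Stmt3Aux.matInv_hasDerivAt (hGs t x) hx
    have h := ((Stmt3Aux.matTrace_hasDerivAt (invd.mul_const Z)).const_mul (1/2 : ℝ)).sub_const q
    simp only [hQ]; exact h
  have DPs : ∀ x : ℝ, IsUnit (G x t) →
      HasDerivAt (fun s'' => P s'' t)
        (1 / 2 * ((-((G x t)⁻¹ * Z * (G x t)⁻¹)) * (H₁ + t • H₂)).trace) x := by
    intro x hx
    have invd := Stmt3Aux.matInv_hasDerivAt (hGs t x) hx
    have h := ((Stmt3Aux.matTrace_hasDerivAt (invd.mul_const (H₁ + t • H₂))).const_mul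
      (1/2 : ℝ)).sub_const (f₁ + t * f₂)
    simp only [hP]; exact h
  have DQt : ∀ s' t' : ℝ, IsUnit (G s' t') →
      HasDerivAt (fun t'' => Q s' t'')
        (1 / 2 * ((-((G s' t')⁻¹ * (H₁ + t' • H₂) * (G s' t')⁻¹)) * Z).trace) t' := by
    intro s' t' hx
    have invd := Stmt3Aux.matInv_hasDerivAt (hGt s' t') hx
    have h := ((Stmt3Aux.matTrace_hasDerivAt (invd.mul_const Z)).const_mul (1/2 : ℝ)).sub_const q
    simp only [hQ]; exact h
  have DPt : ∀ s' t' : ℝ, IsUnit (G s' t') →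
      HasDerivAt (fun t'' => P s' t'')
        (1 / 2 * ((-((G s' t')⁻¹ * (H₁ + t' • H₂) * (G s' t')⁻¹)) * (H₁ + t' • H₂)
          + (G s' t')⁻¹ * H₂).trace - f₂) t' := by
    intro s' t' hx
    have invd := Stmt3Aux.matInv_hasDerivAt (hGt s' t') hx
    have h := ((Stmt3Aux.matTrace_hasDerivAt (invd.mul (hfH t'))).const_mul (1/2 : ℝ)).sub (hff t')
    simp only [hP]; exact h
  -- abbreviations for second round
  have invds : HasDerivAt (fun s' => (G s' t)⁻¹) (-((G s t)⁻¹ * Z * (G s t)⁻¹)) s :=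
    Stmt3Aux.matInv_hasDerivAt (hGs t s) hinv
  have invdt : HasDerivAt (fun t' => (G s t')⁻¹) (-((G s t)⁻¹ * (H₁ + t • H₂) * (G s t)⁻¹)) t :=
    Stmt3Aux.matInv_hasDerivAt (hGt s t) hinv
  refine ⟨⟨?_, ?_⟩, ⟨?_, ?_⟩, ?_, ?_⟩
  · -- ∂ss P
    have e : (fun s' => deriv (fun s'' => P s'' t) s') =ᶠ[nhds s]
        (fun s' => 1 / 2 * ((-((G s' t)⁻¹ * Z * (G s' t)⁻¹)) * (H₁ + t • H₂)).trace) := by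
      filter_upwards [hevs] with s' hs'; exact (DPs s' hs').deriv
    rw [e.deriv_eq]
    have h := (Stmt3Aux.matTrace_hasDerivAt
      ((((invds.mul_const Z).mul invds).neg).mul_const (H₁ + t • H₂))).const_mul (1/2 : ℝ)
    simp only [Pi.mul_apply, Pi.neg_apply, Pi.add_apply] at h
    rw [h.deriv]
    exact Stmt3Aux.key1 ((G s t)⁻¹) Z (H₁ + t • H₂)
  · -- ∂st Q (outer s)
    have e : (fun s' => deriv (fun t' => Q s' t') t) =ᶠ[nhds s]
        (fun s' => 1 / 2 * ((-((G s' t)⁻¹ * (H₁ + t • H₂) * (G s' t)⁻¹)) * Z).trace) := by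
      filter_upwards [hevs] with s' hs'; exact (DQt s' t hs').deriv
    rw [e.deriv_eq]
    have h := (Stmt3Aux.matTrace_hasDerivAt
      ((((invds.mul_const (H₁ + t • H₂)).mul invds).neg).mul_const Z)).const_mul (1/2 : ℝ)
    simp only [Pi.mul_apply, Pi.neg_apply, Pi.add_apply] at h
    rw [h.deriv]
    exact Stmt3Aux.key2 ((G s t)⁻¹) Z (H₁ + t • H₂)
  · -- ∂st P (outer s)
    have e : (fun s' => deriv (fun t' => P s' t') t) =ᶠ[nhds s]
        (fun s' => 1 / 2 * ((-((G s' t)⁻¹ * (H₁ + t • H₂) * (G s' t)⁻¹)) * (H₁ + t • H₂)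
          + (G s' t)⁻¹ * H₂).trace - f₂) := by
      filter_upwards [hevs] with s' hs'; exact (DPt s' t hs').deriv
    rw [e.deriv_eq]
    have h := ((Stmt3Aux.matTrace_hasDerivAt
      (((((invds.mul_const (H₁ + t • H₂)).mul invds).neg).mul_const (H₁ + t • H₂)).add
        (invds.mul_const H₂))).const_mul (1/2 : ℝ)).sub_const f₂
    simp only [Pi.mul_apply, Pi.neg_apply, Pi.add_apply] at h
    rw [h.deriv]
    exact Stmt3Aux.key3 ((G s t)⁻¹) Z (H₁ + t • H₂) H₂
  · -- ∂tt Q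
    have e : (fun t' => deriv (fun t'' => Q s t'') t') =ᶠ[nhds t]
        (fun t' => 1 / 2 * ((-((G s t')⁻¹ * (H₁ + t' • H₂) * (G s t')⁻¹)) * Z).trace) := by
      filter_upwards [hevt] with t' ht'; exact (DQt s t' ht').deriv
    rw [e.deriv_eq]
    have h := (Stmt3Aux.matTrace_hasDerivAt
      ((((invdt.mul (hfH t)).mul invdt).neg).mul_const Z)).const_mul (1/2 : ℝ)
    simp only [Pi.mul_apply, Pi.neg_apply, Pi.add_apply] at h
    rw [h.deriv]
    exact Stmt3Aux.key4 ((G s t)⁻¹) Z (H₁ + t • H₂) H₂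
  · -- ∂tt P
    have e : (fun t' => deriv (fun t'' => P s t'') t') =ᶠ[nhds t]
        (fun t' => 1 / 2 * ((-((G s t')⁻¹ * (H₁ + t' • H₂) * (G s t')⁻¹)) * (H₁ + t' • H₂)
          + (G s t')⁻¹ * H₂).trace - f₂) := by
      filter_upwards [hevt] with t' ht'; exact (DPt s t' ht').deriv
    rw [e.deriv_eq]
    have h := ((Stmt3Aux.matTrace_hasDerivAt
      (((((invdt.mul (hfH t)).mul invdt).neg).mul (hfH t)).add
        (invdt.mul_const H₂))).const_mul (1/2 : ℝ)).sub_const f₂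
    simp only [Pi.mul_apply, Pi.neg_apply, Pi.add_apply] at h
    rw [h.deriv]
    exact Stmt3Aux.key5 ((G s t)⁻¹) (H₁ + t • H₂) H₂
  · -- ∂ss Q
    have e : (fun s' => deriv (fun s'' => Q s'' t) s') =ᶠ[nhds s]
        (fun s' => 1 / 2 * ((-((G s' t)⁻¹ * Z * (G s' t)⁻¹)) * Z).trace) := by
      filter_upwards [hevs] with s' hs'; exact (DQs s' hs').deriv
    rw [e.deriv_eq]
    have h := (Stmt3Aux.matTrace_hasDerivAt
      ((((invds.mul_const Z).mul invds).neg).mul_const Z)).const_mul (1/2 : ℝ)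
    simp only [Pi.mul_apply, Pi.neg_apply, Pi.add_apply] at h
    rw [h.deriv]
    exact Stmt3Aux.key6 ((G s t)⁻¹) Z
end

section
/- Let γ ∈ (1/2, 1) and C > 0, and let (w_j)_{j ≥ 0} be a nondecreasing sequence of real numbers converging to a limit Θ such that Θ − w_j ≤ C·(w_{j+1} − w_{j−1})^γ for every j ≥ 1. Then there exists a constant C′, depending only on γ, C and Θ − w₀, such that Θ − w_j ≤ C′·(j + 1)^{−γ/(1−γ)} for all j ≥ 0. -/
open Real

/-- Bernoulli-type bound: `s^{-q} - (s+1)^{-q} ≤ q/(s+1) * s^{-q}` for `s ≥ 1`, `q ≥ 1`. -/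
lemma bern_aux (s q : ℝ) (hs : 1 ≤ s) (hq : 1 ≤ q) :
    s ^ (-q) - (s + 1) ^ (-q) ≤ q / (s + 1) * s ^ (-q) := by
  have hs0 : (0:ℝ) < s := by linarith
  have hs1 : (0:ℝ) < s + 1 := by linarith
  have hber : 1 + q * (-(1/(s+1))) ≤ (1 + (-(1/(s+1)))) ^ q := by
    apply one_add_mul_self_le_rpow_one_add _ hq
    rw [neg_le, neg_neg, div_le_one hs1]; linarith
  have h1 : (1 : ℝ) + (-(1/(s+1))) = s / (s+1) := by field_simp; ring
  rw [h1, Real.div_rpow hs0.le hs1.le] at hber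
  have hsq : (0:ℝ) < s ^ q := Real.rpow_pos_of_pos hs0 q
  have hsq1 : (0:ℝ) < (s+1) ^ q := Real.rpow_pos_of_pos hs1 q
  have hneg : s ^ (-q) = (s ^ q)⁻¹ := Real.rpow_neg hs0.le q
  have hneg1 : (s+1) ^ (-q) = ((s+1) ^ q)⁻¹ := Real.rpow_neg hs1.le q
  have key : (1 - q/(s+1)) * (s ^ q)⁻¹ ≤ ((s+1) ^ q)⁻¹ := by
    have h2 := mul_le_mul_of_nonneg_right hber (inv_nonneg.mpr hsq.le)
    calc (1 - q/(s+1)) * (s ^ q)⁻¹ = (1 + q * (-(1/(s+1)))) * (s ^ q)⁻¹ := by ring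
      _ ≤ (s ^ q / (s+1) ^ q) * (s ^ q)⁻¹ := h2
      _ = ((s+1) ^ q)⁻¹ := by field_simp
  rw [hneg, hneg1]
  nlinarith [key]

/-- From `K * s^{-q}` bound at half-scale to full scale, at cost `2^q`. -/
lemma half_aux (q K s t : ℝ) (hq0 : 0 ≤ q) (hK : 0 ≤ K) (hs0 : 0 < s) (ht : 0 < t)
    (hst : t ≤ 2 * s) : K * s ^ (-q) ≤ 2 ^ q * K * t ^ (-q) := by
  have h1 : (2*s) ^ (-q) ≤ t ^ (-q) :=
    Real.rpow_le_rpow_of_nonpos ht hst (neg_nonpos.mpr hq0)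
  have h2 : ((2:ℝ)*s) ^ (-q) = 2 ^ (-q) * s ^ (-q) := Real.mul_rpow (by norm_num) hs0.le
  have h3 : (2:ℝ) ^ q * 2 ^ (-q) = 1 := by
    rw [← Real.rpow_add two_pos]; simp
  have h4 : (0:ℝ) ≤ (2:ℝ) ^ q := (Real.rpow_pos_of_pos two_pos q).le
  calc K * s ^ (-q) = (2 ^ q * 2 ^ (-q)) * (K * s ^ (-q)) := by rw [h3, one_mul]
    _ = 2 ^ q * K * (2 ^ (-q) * s ^ (-q)) := by ring
    _ = 2 ^ q * K * ((2*s) ^ (-q)) := by rw [h2]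
    _ ≤ 2 ^ q * K * t ^ (-q) := mul_le_mul_of_nonneg_left h1 (mul_nonneg h4 hK)

/-- Key discrete decay lemma. -/
lemma decay_aux (q c K : ℝ) (hq : 1 ≤ q) (hc : 0 < c) (hK : 0 < K)
    (hKbig : q * 2 ^ q ≤ c * K ^ (1/q)) (x : ℕ → ℝ)
    (hx0 : ∀ m, 0 ≤ x m) (hxK : x 0 ≤ K)
    (hrec : ∀ m, x (m+1) + c * (x (m+1)) ^ (1 + 1/q) ≤ x m) :
    ∀ m : ℕ, x m ≤ K * ((m : ℝ) + 1) ^ (-q) := by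
  have hq0 : (0:ℝ) < q := by linarith
  intro m
  induction m with
  | zero => simpa using hxK
  | succ m ih =>
    by_contra hcon
    push_neg at hcon
    have hcast : ((m + 1 : ℕ) : ℝ) + 1 = (m : ℝ) + 2 := by push_cast; ring
    rw [hcast] at hcon
    set t : ℝ := K * ((m : ℝ) + 2) ^ (-q) with ht
    have hm2 : (0:ℝ) < (m : ℝ) + 2 := by positivity
    have hm1 : (0:ℝ) < (m : ℝ) + 1 := by positivity
    have htpos : 0 < t := mul_pos hK (Real.rpow_pos_of_pos hm2 _)
    -- x m > t + c t^p
    have hstep : t + c * t ^ (1 + 1/q) < x m := by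
      have h1 : t ^ (1 + 1/q) ≤ (x (m+1)) ^ (1 + 1/q) :=
        Real.rpow_le_rpow htpos.le hcon.le (by positivity)
      have h2 := hrec m
      nlinarith [mul_le_mul_of_nonneg_left h1 hc.le]
    -- but t + c t^p ≥ K (m+1)^{-q}
    have hcore : K * ((m : ℝ) + 1) ^ (-q) ≤ t + c * t ^ (1 + 1/q) := by
      have E1 : t ^ (1 + 1/q) = K ^ (1 + 1/q) * ((m:ℝ) + 2) ^ (-(q+1)) := by
        rw [ht, Real.mul_rpow hK.le (Real.rpow_pos_of_pos hm2 _).le,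
          ← Real.rpow_mul hm2.le]
        congr 2
        field_simp
      have E2 : K ^ (1 + 1/q) = K * K ^ (1/q) := by
        rw [Real.rpow_add hK, Real.rpow_one]
      have E3 : ((m:ℝ) + 2) ^ (-(q+1)) = ((m:ℝ)+2) ^ (-q) * ((m:ℝ)+2)⁻¹ := by
        have : -(q+1) = (-q) + (-1) := by ring
        rw [this, Real.rpow_add hm2, Real.rpow_neg_one]
      have B : ((m:ℝ)+1) ^ (-q) - ((m:ℝ)+2) ^ (-q) ≤ q/((m:ℝ)+2) * ((m:ℝ)+1) ^ (-q) := by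
        have := bern_aux ((m:ℝ)+1) q (by linarith) hq
        have e : ((m:ℝ)+1) + 1 = (m:ℝ) + 2 := by ring
        rwa [e] at this
      have H2 : ((m:ℝ)+1) ^ (-q) ≤ 2 ^ q * (((m:ℝ)+2) ^ (-q)) := by
        have := half_aux q 1 ((m:ℝ)+1) ((m:ℝ)+2) hq0.le zero_le_one hm1 hm2 (by linarith)
        simpa using this
      have chain : q/((m:ℝ)+2) * ((m:ℝ)+1) ^ (-q)
          ≤ c * K ^ (1/q) * (((m:ℝ)+2) ^ (-q) * ((m:ℝ)+2)⁻¹) := by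
        calc q/((m:ℝ)+2) * ((m:ℝ)+1) ^ (-q)
            ≤ q/((m:ℝ)+2) * (2 ^ q * (((m:ℝ)+2) ^ (-q))) :=
              mul_le_mul_of_nonneg_left H2 (by positivity)
          _ = (q * 2 ^ q) * (((m:ℝ)+2) ^ (-q) * ((m:ℝ)+2)⁻¹) := by ring
          _ ≤ c * K ^ (1/q) * (((m:ℝ)+2) ^ (-q) * ((m:ℝ)+2)⁻¹) := by
              apply mul_le_mul_of_nonneg_right hKbig
              positivity
      rw [E1, E2, E3, ht]
      nlinarith [mul_le_mul_of_nonneg_left B hK.le, mul_le_mul_of_nonneg_left chain hK.le]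
    linarith

/-- Discrete Lojasiewicz iteration: a nondecreasing sequence `w` converging to `Θ` with
`Θ - w j ≤ C (w (j+1) - w (j-1))^γ` satisfies the polynomial decay
`Θ - w j ≤ C' (j+1)^{-γ/(1-γ)}`, where `C'` depends only on `γ`, `C` and `Θ - w 0`. -/
theorem stmt_8 (γ C D : ℝ) (hγ : γ ∈ Set.Ioo (1 / 2 : ℝ) 1) (hC : 0 < C) :
    ∃ C' : ℝ, ∀ (w : ℕ → ℝ) (Θ : ℝ), Monotone w →
      Filter.Tendsto w Filter.atTop (nhds Θ) →
      Θ - w 0 ≤ D →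
      (∀ j : ℕ, 1 ≤ j → Θ - w j ≤ C * (w (j + 1) - w (j - 1)) ^ γ) →
      ∀ j : ℕ, Θ - w j ≤ C' * ((j : ℝ) + 1) ^ (-(γ / (1 - γ))) := by
  obtain ⟨hγ1, hγ2⟩ := hγ
  have hγ0 : 0 < γ := by linarith
  have h1γ : 0 < 1 - γ := by linarith
  set q : ℝ := γ / (1 - γ) with hqdef
  have hq1 : 1 ≤ q := by rw [hqdef, le_div_iff₀ h1γ]; linarith
  have hq0 : 0 < q := by linarith
  have hpq : 1 + 1/q = 1/γ := by
    rw [hqdef]; field_simp; ring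
  set c : ℝ := C ^ (-(1/γ)) with hcdef
  have hc : 0 < c := Real.rpow_pos_of_pos hC _
  set K : ℝ := max (max D 1) ((q * 2 ^ q / c) ^ q) with hKdef
  have hK1 : (1:ℝ) ≤ K := le_trans (le_max_right D 1) (le_max_left _ _)
  have hK : 0 < K := lt_of_lt_of_le one_pos hK1
  have hKD : D ≤ K := le_trans (le_max_left D 1) (le_max_left _ _)
  have hbase : (0:ℝ) < q * 2 ^ q / c := by positivity
  have hKbig : q * 2 ^ q ≤ c * K ^ (1/q) := by
    have h1 : (q * 2 ^ q / c) ^ q ≤ K := le_max_right _ _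
    have h2 : ((q * 2 ^ q / c) ^ q) ^ (1/q) ≤ K ^ (1/q) :=
      Real.rpow_le_rpow (Real.rpow_pos_of_pos hbase q).le h1 (by positivity)
    have h3 : ((q * 2 ^ q / c) ^ q) ^ (1/q) = q * 2 ^ q / c := by
      rw [← Real.rpow_mul hbase.le, mul_one_div, div_self hq0.ne', Real.rpow_one]
    rw [h3] at h2
    calc q * 2 ^ q = c * (q * 2 ^ q / c) := by field_simp
      _ ≤ c * K ^ (1/q) := mul_le_mul_of_nonneg_left h2 hc.le
  refine ⟨2 ^ q * K, fun w Θ hmono htend hD hrec => ?_⟩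
  have hwle : ∀ j, w j ≤ Θ := fun j => hmono.ge_of_tendsto htend j
  have ha0 : ∀ j, 0 ≤ Θ - w j := fun j => by linarith [hwle j]
  -- key derived recursion
  have hkey : ∀ j : ℕ, 1 ≤ j →
      (Θ - w (j+1)) + c * (Θ - w (j+1)) ^ (1 + 1/q) ≤ Θ - w (j-1) := by
    intro j hj
    set d : ℝ := w (j+1) - w (j-1) with hd
    have hd0 : 0 ≤ d := by
      have := hmono (show j - 1 ≤ j + 1 by omega); linarith
    have h1 : Θ - w j ≤ C * d ^ γ := hrec j hj
    have h2 : Θ - w (j+1) ≤ Θ - w j := by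
      have := hmono (Nat.le_succ j); linarith
    have h3 : (Θ - w (j+1)) ^ (1/γ) ≤ (C * d ^ γ) ^ (1/γ) :=
      Real.rpow_le_rpow (ha0 _) (h2.trans h1) (by positivity)
    have h4 : (C * d ^ γ) ^ (1/γ) = C ^ (1/γ) * d := by
      rw [Real.mul_rpow hC.le (Real.rpow_nonneg hd0 γ), ← Real.rpow_mul hd0]
      rw [mul_one_div, div_self hγ0.ne', Real.rpow_one]
    have h5 : c * C ^ (1/γ) = 1 := by
      rw [hcdef, ← Real.rpow_add hC]; simp
    have h6 : c * (Θ - w (j+1)) ^ (1 + 1/q) ≤ d := by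
      rw [hpq]
      calc c * (Θ - w (j+1)) ^ (1/γ) ≤ c * (C * d ^ γ) ^ (1/γ) :=
            mul_le_mul_of_nonneg_left h3 hc.le
        _ = c * C ^ (1/γ) * d := by rw [h4]; ring
        _ = d := by rw [h5, one_mul]
    have : Θ - w (j+1) + d = Θ - w (j-1) := by rw [hd]; ring
    linarith
  -- even subsequence
  have heven : ∀ m : ℕ, Θ - w (2*m) ≤ K * ((m:ℝ)+1) ^ (-q) := by
    apply decay_aux q c K hq1 hc hK hKbig (fun m => Θ - w (2*m)) (fun m => ha0 _)
      (by show Θ - w (2*0) ≤ K; norm_num; linarith)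
    intro m
    have := hkey (2*m+1) (by omega)
    have e1 : 2*m+1+1 = 2*(m+1) := by ring
    have e2 : 2*m+1-1 = 2*m := by omega
    rwa [e1, e2] at this
  -- odd subsequence
  have hodd : ∀ m : ℕ, Θ - w (2*m+1) ≤ K * ((m:ℝ)+1) ^ (-q) := by
    apply decay_aux q c K hq1 hc hK hKbig (fun m => Θ - w (2*m+1)) (fun m => ha0 _)
    · show Θ - w (2*0+1) ≤ K
      have := hmono (Nat.zero_le 1); norm_num; linarith
    intro m
    have := hkey (2*m+2) (by omega)
    have e1 : 2*m+2+1 = 2*(m+1)+1 := by ring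
    have e2 : 2*m+2-1 = 2*m+1 := by omega
    rwa [e1, e2] at this
  intro j
  rcases Nat.even_or_odd j with ⟨m, rfl⟩ | ⟨m, rfl⟩
  · have h1 := heven m
    have h2 : K * ((m:ℝ)+1) ^ (-q) ≤ 2 ^ q * K * (((m + m : ℕ) : ℝ) + 1) ^ (-q) := by
      apply half_aux q K _ _ hq0.le hK.le (by positivity) (by positivity)
      push_cast; linarith
    have e : 2*m = m + m := by ring
    rw [e] at h1
    exact le_trans h1 h2
  · have h1 := hodd m
    have h2 : K * ((m:ℝ)+1) ^ (-q) ≤ 2 ^ q * K * (((2*m + 1 : ℕ) : ℝ) + 1) ^ (-q) := by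
      apply half_aux q K _ _ hq0.le hK.le (by positivity) (by positivity)
      push_cast; linarith
    exact le_trans h1 h2
end

section
/- Let γ ∈ (1/2, 1), ζ ∈ (1 − γ, 1) and C > 0, and let (w_j)_{j ≥ 0} be a nondecreasing sequence of real numbers converging to a limit Θ such that Θ − w_j ≤ C·(w_{j+1} − w_{j−1})^γ for every j ≥ 1. Then the series ∑_{j ≥ 1} (w_j − w_{j−1})^ζ converges. -/
set_option linter.unusedVariables false


/-- MVT-type bound: `x^(-α) - (x+1)^(-α) ≤ α x^(-α-1)` for `x ≥ 1`, `α ≥ 1`. -/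
private lemma aux_rpow_diff_le {x α : ℝ} (hx : 1 ≤ x) (hα : 1 ≤ α) :
    x ^ (-α) - (x + 1) ^ (-α) ≤ α * x ^ (-α - 1) := by
  have hx0 : 0 < x := lt_of_lt_of_le one_pos hx
  have hx1 : 0 < x + 1 := by linarith
  have hα0 : 0 < α := lt_of_lt_of_le one_pos hα
  have hs : (-1 : ℝ) ≤ -1 / (x + 1) := by
    rw [neg_div]
    have h1 : 1 / (x + 1) ≤ 1 := by rw [div_le_one hx1]; linarith
    linarith
  have hb := one_add_mul_self_le_rpow_one_add hs hα
  have he : 1 + (-1 / (x + 1)) = x / (x + 1) := by field_simp; ring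
  rw [he] at hb
  -- hb : 1 + α * (-1 / (x + 1)) ≤ (x / (x + 1)) ^ α
  have hfrac : x ^ (-α) * (x / (x + 1)) ^ α = (x + 1) ^ (-α) := by
    rw [Real.div_rpow hx0.le hx1.le, Real.rpow_neg hx0.le, Real.rpow_neg hx1.le]
    field_simp
  have hxa : 0 < x ^ (-α) := Real.rpow_pos_of_pos hx0 _
  have step1 : x ^ (-α) - (x + 1) ^ (-α) ≤ x ^ (-α) * (α / (x + 1)) := by
    rw [← hfrac]
    have : 1 - (x / (x + 1)) ^ α ≤ α / (x + 1) := by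
      have : α * (-1 / (x + 1)) = -(α / (x + 1)) := by ring
      rw [this] at hb; linarith
    nlinarith
  have step2 : x ^ (-α) * (α / (x + 1)) ≤ α * x ^ (-α - 1) := by
    have hpow : x ^ (-α - 1) = x ^ (-α) * x⁻¹ := by
      rw [show -α - 1 = -α + (-1) by ring, Real.rpow_add hx0, Real.rpow_neg_one]
    rw [hpow]
    have h1 : α / (x + 1) ≤ α / x := by
      apply div_le_div_of_nonneg_left hα0.le hx0; linarith
    calc x ^ (-α) * (α / (x + 1)) ≤ x ^ (-α) * (α / x) :=
          mul_le_mul_of_nonneg_left h1 hxa.le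
      _ = α * (x ^ (-α) * x⁻¹) := by rw [div_eq_mul_inv]; ring
  linarith

/-- Concavity (gradient) inequality for `t ↦ t^c`, `0 < c < 1`. -/
private lemma aux_concave {x y c : ℝ} (hx : 0 < x) (hy : 0 ≤ y) (hyx : y ≤ x)
    (hc0 : 0 < c) (hc1 : c < 1) : c * x ^ (c - 1) * (x - y) ≤ x ^ c - y ^ c := by
  have ht0 : 0 ≤ y / x := div_nonneg hy hx.le
  have h := Real.geom_mean_le_arith_mean2_weighted hc0.le (by linarith : (0:ℝ) ≤ 1 - c)
      ht0 zero_le_one (by ring)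
  rw [Real.one_rpow, mul_one, mul_one] at h
  -- h : (y/x)^c ≤ c * (y/x) + (1 - c)
  have hyc : y ^ c = (y / x) ^ c * x ^ c := by
    rw [Real.div_rpow hy hx.le, div_mul_cancel₀]
    exact (Real.rpow_pos_of_pos hx c).ne'
  have hxc : x ^ (c - 1) * x = x ^ c := by
    rw [← Real.rpow_add_one hx.ne' (c - 1), sub_add_cancel]
  have hxcpos : 0 < x ^ c := Real.rpow_pos_of_pos hx c
  have hdiv : c * (y / x) * x ^ c = c * y * x ^ (c - 1) := by
    rw [← hxc]; field_simp
  have h2 : y ^ c ≤ c * y * x ^ (c - 1) + (1 - c) * x ^ c := by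
    calc y ^ c = (y / x) ^ c * x ^ c := hyc
      _ ≤ (c * (y / x) + (1 - c)) * x ^ c := by
          apply mul_le_mul_of_nonneg_right h hxcpos.le
      _ = c * y * x ^ (c - 1) + (1 - c) * x ^ c := by rw [add_mul, hdiv]
  nlinarith [hxc]

/-- Decay rate for sequences satisfying the discrete Lojasiewicz recursion. -/
private lemma aux_decay {γ M : ℝ} (hγhalf : 1 / 2 < γ) (hγ1 : γ < 1) (hM : 0 < M)
    (e : ℕ → ℝ) (he0 : ∀ k, 0 ≤ e k) (hea : ∀ k, e (k + 1) ≤ e k)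
    (hrec : ∀ k, e (k + 1) ≤ M * (e k - e (k + 1)) ^ γ) :
    ∃ K : ℝ, 0 < K ∧ ∀ k : ℕ, 1 ≤ k → e k ≤ K * (k : ℝ) ^ (-(γ / (1 - γ))) := by
  have h1γ : 0 < 1 - γ := by linarith
  have hγ0 : 0 < γ := by linarith
  set α := γ / (1 - γ) with hαdef
  have hα1 : 1 < α := by rw [hαdef, lt_div_iff₀ h1γ]; linarith
  have hα0 : 0 < α := by linarith
  have hαγ : (α + 1) * γ = α := by rw [hαdef]; field_simp; ring
  set B := M * α ^ γ * 2 ^ α with hB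
  have hB0 : 0 < B := by positivity
  set K := max (e 1) (B ^ (1 / (1 - γ))) with hK
  have hK0 : 0 < K := lt_of_lt_of_le (Real.rpow_pos_of_pos hB0 _) (le_max_right _ _)
  have hKB : B ≤ K ^ (1 - γ) := by
    calc B = (B ^ (1 / (1 - γ))) ^ (1 - γ) := by
          rw [← Real.rpow_mul hB0.le, one_div, inv_mul_cancel₀ h1γ.ne', Real.rpow_one]
      _ ≤ K ^ (1 - γ) :=
          Real.rpow_le_rpow (Real.rpow_pos_of_pos hB0 _).le (le_max_right _ _) h1γ.le
  refine ⟨K, hK0, ?_⟩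
  intro k hk
  induction k, hk using Nat.le_induction with
  | base =>
    have h := le_max_left (e 1) (B ^ (1 / (1 - γ)))
    rw [← hK] at h
    simpa using h
  | succ k hk ih =>
    by_contra hcon
    push_neg at hcon
    have hk1 : (1 : ℝ) ≤ (k : ℝ) := by exact_mod_cast hk
    have hkpos : (0 : ℝ) < (k : ℝ) := by linarith
    have hkα : (0 : ℝ) < (k : ℝ) ^ (-α) := Real.rpow_pos_of_pos hkpos _
    have hcon' : K * ((k : ℝ) + 1) ^ (-α) < e (k + 1) := by
      push_cast at hcon; exact hcon
    have hdiff := aux_rpow_diff_le hk1 hα1.le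
    have hd1 : e k - e (k + 1) < K * (α * (k : ℝ) ^ (-α - 1)) := by
      nlinarith [mul_le_mul_of_nonneg_left hdiff hK0.le]
    have hsub : 0 ≤ e k - e (k + 1) := sub_nonneg.mpr (hea k)
    have h4 : e (k + 1) ≤ M * (K * (α * (k : ℝ) ^ (-α - 1))) ^ γ :=
      (hrec k).trans (mul_le_mul_of_nonneg_left
        (Real.rpow_le_rpow hsub hd1.le hγ0.le) hM.le)
    have h5 : (K * (α * (k : ℝ) ^ (-α - 1))) ^ γ = K ^ γ * α ^ γ * (k : ℝ) ^ (-α) := by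
      rw [Real.mul_rpow hK0.le (by positivity), Real.mul_rpow hα0.le (by positivity),
        ← Real.rpow_mul hkpos.le, show (-α - 1) * γ = -((α + 1) * γ) by ring, hαγ, mul_assoc]
    have h6 : (2 : ℝ) ^ (-α) * (k : ℝ) ^ (-α) ≤ ((k : ℝ) + 1) ^ (-α) := by
      rw [← Real.mul_rpow (by norm_num) hkpos.le]
      exact Real.rpow_le_rpow_of_nonpos (by linarith) (by linarith) (by linarith)
    have h7 : K * (2 : ℝ) ^ (-α) * (k : ℝ) ^ (-α) < M * (K ^ γ * α ^ γ) * (k : ℝ) ^ (-α) := by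
      calc K * (2 : ℝ) ^ (-α) * (k : ℝ) ^ (-α) = K * ((2 : ℝ) ^ (-α) * (k : ℝ) ^ (-α)) := by ring
        _ ≤ K * ((k : ℝ) + 1) ^ (-α) := mul_le_mul_of_nonneg_left h6 hK0.le
        _ < e (k + 1) := hcon'
        _ ≤ M * (K ^ γ * α ^ γ * (k : ℝ) ^ (-α)) := by rw [← h5]; exact h4
        _ = M * (K ^ γ * α ^ γ) * (k : ℝ) ^ (-α) := by ring
    have h8 : K * (2 : ℝ) ^ (-α) < M * (K ^ γ * α ^ γ) := (mul_lt_mul_iff_of_pos_right hkα).mp h7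
    have hKsplit : K ^ (1 - γ) * K ^ γ = K := by
      rw [← Real.rpow_add hK0, sub_add_cancel, Real.rpow_one]
    have h2α : (2 : ℝ) ^ (-α) * 2 ^ α = 1 := by
      rw [← Real.rpow_add (by norm_num), neg_add_cancel, Real.rpow_zero]
    have hKγ : 0 < K ^ γ := Real.rpow_pos_of_pos hK0 _
    have h2a : 0 < (2 : ℝ) ^ α := Real.rpow_pos_of_pos (by norm_num) _
    have h9 : K ^ (1 - γ) * K ^ γ < B * K ^ γ := by
      calc K ^ (1 - γ) * K ^ γ = K * (2 : ℝ) ^ (-α) * 2 ^ α := by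
            rw [hKsplit, mul_assoc, h2α, mul_one]
        _ < M * (K ^ γ * α ^ γ) * 2 ^ α := mul_lt_mul_of_pos_right h8 h2a
        _ = B * K ^ γ := by rw [hB]; ring
    have h10 : K ^ (1 - γ) < B := (mul_lt_mul_iff_of_pos_right hKγ).mp h9
    exact absurd h10 (not_lt.mpr hKB)

/-- Discrete summability under the Lojasiewicz inequality: if the nondecreasing sequence `w`
converges to `Θ` and `Θ - w j ≤ C (w (j+1) - w (j-1))^γ`, then for `ζ ∈ (1-γ, 1)` the series
`∑ (w (j+1) - w j)^ζ` converges. -/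
theorem stmt_9 (γ ζ C : ℝ) (hγ : γ ∈ Set.Ioo (1 / 2 : ℝ) 1) (hζ : ζ ∈ Set.Ioo (1 - γ) 1)
    (hC : 0 < C) (w : ℕ → ℝ) (Θ : ℝ) (hmono : Monotone w)
    (hlim : Filter.Tendsto w Filter.atTop (nhds Θ))
    (hloja : ∀ j : ℕ, 1 ≤ j → Θ - w j ≤ C * (w (j + 1) - w (j - 1)) ^ γ) :
    Summable fun j : ℕ => (w (j + 1) - w j) ^ ζ := by
  obtain ⟨hγhalf, hγ1⟩ := hγ
  obtain ⟨hζγ, hζ1⟩ := hζ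
  have hγ0 : 0 < γ := by linarith
  have hζ0 : 0 < ζ := by linarith
  have h1γ : 0 < 1 - γ := by linarith
  have h1ζ : 0 < 1 - ζ := by linarith
  set α := γ / (1 - γ) with hαdef
  have hα1 : 1 < α := by rw [hαdef, lt_div_iff₀ h1γ]; linarith
  have hα0 : 0 < α := by linarith
  set d := fun j : ℕ => Θ - w j with hd
  have hwle : ∀ j, w j ≤ Θ := fun j => hmono.ge_of_tendsto hlim j
  have hd0 : ∀ j, 0 ≤ d j := fun j => sub_nonneg.mpr (hwle j)
  have hdanti : ∀ {i j : ℕ}, i ≤ j → d j ≤ d i := fun h => sub_le_sub_left (hmono h) Θ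
  have hda : ∀ j, 0 ≤ d j - d (j + 1) := fun j => sub_nonneg.mpr (hdanti (Nat.le_succ j))
  -- the recursion for `e k = d (2k)`
  have hrec : ∀ k : ℕ, d (2 * (k + 1)) ≤ C * (d (2 * k) - d (2 * (k + 1))) ^ γ := by
    intro k
    have h := hloja (2 * k + 1) (by omega)
    have h1 : (2 * k + 1) - 1 = 2 * k := by omega
    have h2 : (2 * k + 1) + 1 = 2 * (k + 1) := by omega
    rw [h1, h2] at h
    have h3 : w (2 * (k + 1)) - w (2 * k) = d (2 * k) - d (2 * (k + 1)) := by
      simp only [hd]; ring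
    rw [h3] at h
    exact (hdanti (by omega : 2 * k + 1 ≤ 2 * (k + 1))).trans h
  obtain ⟨K, hK0, hdecK⟩ := aux_decay hγhalf hγ1 hC (fun k => d (2 * k))
      (fun k => hd0 _) (fun k => hdanti (by omega)) hrec
  rw [← hαdef] at hdecK
  set K₂ := K * 4 ^ α with hK₂
  have h4α : (0:ℝ) < 4 ^ α := Real.rpow_pos_of_pos (by norm_num) _
  have hK₂0 : 0 < K₂ := mul_pos hK0 h4α
  have hdec : ∀ j : ℕ, 2 ≤ j → d j ≤ K₂ * (j : ℝ) ^ (-α) := by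
    intro j hj
    have hk1 : 1 ≤ j / 2 := by omega
    have h2k : 2 * (j / 2) ≤ j := by omega
    have h1 : d j ≤ K * ((j / 2 : ℕ) : ℝ) ^ (-α) := (hdanti h2k).trans (hdecK _ hk1)
    have h2n : j ≤ 4 * (j / 2) := by omega
    have hjpos : (0 : ℝ) < (j : ℝ) := Nat.cast_pos.mpr (by omega)
    have h2 : (j : ℝ) / 4 ≤ ((j / 2 : ℕ) : ℝ) := by
      have : (j : ℝ) ≤ 4 * ((j / 2 : ℕ) : ℝ) := by exact_mod_cast h2n
      linarith
    have h3 : ((j / 2 : ℕ) : ℝ) ^ (-α) ≤ ((j : ℝ) / 4) ^ (-α) :=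
      Real.rpow_le_rpow_of_nonpos (by linarith) h2 (by linarith)
    have h4 : ((j : ℝ) / 4) ^ (-α) = 4 ^ α * (j : ℝ) ^ (-α) := by
      rw [Real.div_rpow hjpos.le (by norm_num), Real.rpow_neg (by norm_num : (0:ℝ) ≤ 4),
        div_eq_mul_inv, inv_inv, mul_comm]
    calc d j ≤ K * ((j / 2 : ℕ) : ℝ) ^ (-α) := h1
      _ ≤ K * (4 ^ α * (j : ℝ) ^ (-α)) := by
          rw [← h4]; exact mul_le_mul_of_nonneg_left h3 hK0.le
      _ = K₂ * (j : ℝ) ^ (-α) := by rw [hK₂]; ring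
  -- choice of parameters
  have hζα0 : 0 < ζ * α := mul_pos hζ0 hα0
  have hζα : 1 - ζ < ζ * α := by
    rw [hαdef, show ζ * (γ / (1 - γ)) = ζ * γ / (1 - γ) by ring, lt_div_iff₀ h1γ]
    nlinarith
  set μ := ((1 - ζ) / (ζ * α) + 1) / 2 with hμdef
  have ht1 : (1 - ζ) / (ζ * α) < 1 := (div_lt_one hζα0).mpr hζα
  have ht0 : 0 < (1 - ζ) / (ζ * α) := div_pos h1ζ hζα0
  have hμ0 : 0 < μ := by rw [hμdef]; linarith
  have hμ1 : μ < 1 := by rw [hμdef]; linarith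
  set s := μ * ζ / (1 - ζ) with hsdef
  have hs0 : 0 < s := by rw [hsdef]; positivity
  have hαs : 1 < α * s := by
    have hkey : (1 - ζ) / (ζ * α) * (ζ * α) = 1 - ζ := div_mul_cancel₀ _ hζα0.ne'
    have hμt : (1 - ζ) / (ζ * α) < μ := by rw [hμdef]; linarith
    rw [hsdef, show α * (μ * ζ / (1 - ζ)) = α * μ * ζ / (1 - ζ) by ring, lt_div_iff₀ h1ζ]
    nlinarith [mul_pos (sub_pos.mpr hμt) hζα0]
  -- summability of the telescoping part
  have hgsum : Summable (fun j => d j ^ (-μ) * (d j - d (j + 1))) := by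
    apply summable_of_sum_range_le (c := d 0 ^ (1 - μ) / (1 - μ))
      (fun j => mul_nonneg (Real.rpow_nonneg (hd0 j) _) (hda j))
    intro n
    have h1μ : 0 < 1 - μ := by linarith
    have hpt : ∀ j, d j ^ (-μ) * (d j - d (j + 1)) ≤
        (d j ^ (1 - μ) - d (j + 1) ^ (1 - μ)) / (1 - μ) := by
      intro j
      rcases eq_or_lt_of_le (hd0 j) with h0 | h0
      · have hj1 : d (j + 1) = 0 :=
          le_antisymm (by rw [h0]; exact hdanti (Nat.le_succ j)) (hd0 _)
        rw [← h0, hj1]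
        simp
      · have hcc := aux_concave h0 (hd0 (j + 1)) (hdanti (Nat.le_succ j)) h1μ (by linarith)
        rw [le_div_iff₀ h1μ]
        calc d j ^ (-μ) * (d j - d (j + 1)) * (1 - μ)
            = (1 - μ) * d j ^ (1 - μ - 1) * (d j - d (j + 1)) := by
              rw [show 1 - μ - 1 = -μ by ring]; ring
          _ ≤ _ := hcc
    calc ∑ j ∈ Finset.range n, d j ^ (-μ) * (d j - d (j + 1))
        ≤ ∑ j ∈ Finset.range n, (d j ^ (1 - μ) - d (j + 1) ^ (1 - μ)) / (1 - μ) :=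
          Finset.sum_le_sum fun j _ => hpt j
      _ = (d 0 ^ (1 - μ) - d n ^ (1 - μ)) / (1 - μ) := by
          rw [← Finset.sum_div, Finset.sum_range_sub' (fun j => d j ^ (1 - μ))]
      _ ≤ d 0 ^ (1 - μ) / (1 - μ) := by
          apply div_le_div_of_nonneg_right ?_ h1μ.le
          linarith [Real.rpow_nonneg (hd0 n) (1 - μ)]
  -- summability of the power part
  have hhsum : Summable (fun j => d j ^ s) := by
    rw [← summable_nat_add_iff 2]
    have hbsum : Summable (fun j : ℕ => K₂ ^ s * ((j + 2 : ℕ) : ℝ) ^ (-(α * s))) := by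
      apply Summable.mul_left
      exact (summable_nat_add_iff 2).mpr (Real.summable_nat_rpow.mpr (by linarith))
    apply Summable.of_nonneg_of_le (fun j => Real.rpow_nonneg (hd0 _) _) ?_ hbsum
    intro j
    have hj2 : (0:ℝ) < ((j + 2 : ℕ) : ℝ) := Nat.cast_pos.mpr (by omega)
    calc d (j + 2) ^ s ≤ (K₂ * ((j + 2 : ℕ) : ℝ) ^ (-α)) ^ s :=
          Real.rpow_le_rpow (hd0 _) (hdec (j + 2) (by omega)) hs0.le
      _ = K₂ ^ s * ((j + 2 : ℕ) : ℝ) ^ (-(α * s)) := by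
          rw [Real.mul_rpow hK₂0.le (Real.rpow_nonneg hj2.le _),
            ← Real.rpow_mul hj2.le, show -α * s = -(α * s) by ring]
  -- final comparison
  have key : ∀ j, (w (j + 1) - w j) ^ ζ ≤
      ζ * (d j ^ (-μ) * (d j - d (j + 1))) + (1 - ζ) * d j ^ s := by
    intro j
    have hwd : w (j + 1) - w j = d j - d (j + 1) := by simp only [hd]; ring
    rw [hwd]
    rcases eq_or_lt_of_le (hd0 j) with h0 | h0
    · have hj1 : d (j + 1) = 0 :=
        le_antisymm (by rw [h0]; exact hdanti (Nat.le_succ j)) (hd0 _)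
      rw [← h0, hj1]
      simp [Real.zero_rpow hζ0.ne', Real.zero_rpow hs0.ne']
    · have ha0 : 0 ≤ d j - d (j + 1) := hda j
      have hgm := Real.geom_mean_le_arith_mean2_weighted hζ0.le h1ζ.le
        (mul_nonneg ha0 (Real.rpow_nonneg (hd0 j) (-μ))) (Real.rpow_nonneg (hd0 j) s)
        (by ring)
      have hexp : -μ * ζ + s * (1 - ζ) = 0 := by
        rw [hsdef]; field_simp; ring
      have hid : ((d j - d (j + 1)) * d j ^ (-μ)) ^ ζ * (d j ^ s) ^ (1 - ζ)
          = (d j - d (j + 1)) ^ ζ := by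
        rw [Real.mul_rpow ha0 (Real.rpow_nonneg (hd0 j) _), ← Real.rpow_mul (hd0 j),
          ← Real.rpow_mul (hd0 j), mul_assoc, ← Real.rpow_add h0, hexp, Real.rpow_zero,
          mul_one]
      rw [hid] at hgm
      calc (d j - d (j + 1)) ^ ζ
          ≤ ζ * ((d j - d (j + 1)) * d j ^ (-μ)) + (1 - ζ) * d j ^ s := hgm
        _ = ζ * (d j ^ (-μ) * (d j - d (j + 1))) + (1 - ζ) * d j ^ s := by ring
  exact Summable.of_nonneg_of_le
    (fun j => Real.rpow_nonneg (sub_nonneg.mpr (hmono (Nat.le_succ j))) ζ) key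
    ((hgsum.mul_left ζ).add (hhsum.mul_left (1 - ζ)))
end

section
/- Let γ ∈ (1/2, 1), a > 0, C > 0, s₀ ∈ ℝ, and let w : [s₀, ∞) → ℝ be a nondecreasing bounded function with supremum Θ satisfying Θ − w(s) ≤ C·(w(s + a) − w(s − a))^γ for every s ≥ s₀ + a. Then: (1) there exists C′, depending only on γ, a, C and Θ − w(s₀), such that Θ − w(s) ≤ C′·(1 + s − s₀)^{−γ/(1−γ)} for all s ≥ s₀ + a; and (2) for every ζ ∈ (1 − γ, 1), the integral ∫_{s₀+a}^{∞} (w(s′ + a) − w(s′ − a))^ζ ds′ is finite. -/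
open Real Set MeasureTheory

set_option maxHeartbeats 1000000


private lemma bern_upper {t μ : ℝ} (ht : 0 ≤ t) (hμ0 : 0 ≤ μ) (hμ1 : μ ≤ 1) :
    t ^ μ ≤ 1 + μ * (t - 1) := by
  have h := rpow_one_add_le_one_add_mul_self (s := t - 1) (by linarith) hμ0 hμ1
  rwa [show (1 : ℝ) + (t - 1) = t by ring] at h

private lemma rpow_diff_le {u v q : ℝ} (hv : 0 < v) (hvu : v ≤ u) (hq : 1 ≤ q) :
    u ^ q - v ^ q ≤ q * u ^ (q - 1) * (u - v) := by
  have hu : 0 < u := hv.trans_le hvu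
  have hb : 1 + q * (v / u - 1) ≤ (v / u) ^ q := by
    have h := one_add_mul_self_le_rpow_one_add (s := v / u - 1)
      (by have : (0:ℝ) ≤ v / u := by positivity
          linarith) hq
    rwa [show (1 : ℝ) + (v / u - 1) = v / u by ring] at h
  rw [Real.div_rpow hv.le hu.le] at hb
  have huq : (0:ℝ) < u ^ q := Real.rpow_pos_of_pos hu q
  have hq1 : u ^ (q - 1) = u ^ q / u := Real.rpow_sub_one hu.ne' q
  have e2 : u ^ q = u ^ (q - 1) * u := by rw [hq1]; field_simp
  have h2 : (1 + q * (v / u - 1)) * u ^ q ≤ v ^ q := by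
    calc (1 + q * (v / u - 1)) * u ^ q ≤ (v ^ q / u ^ q) * u ^ q :=
          mul_le_mul_of_nonneg_right hb huq.le
    _ = v ^ q := div_mul_cancel₀ _ huq.ne'
  have e1q : q * (v / u * (u ^ (q - 1) * u)) = q * (v * u ^ (q - 1)) := by
    field_simp
  rw [e2] at h2 ⊢
  linarith [h2, e1q]

private lemma eps_trick {b ε ζ : ℝ} (hb : 0 ≤ b) (hε : 0 < ε) (hζ0 : 0 < ζ) (hζ1 : ζ < 1) :
    b ^ ζ ≤ ε ^ ζ + ε ^ (ζ - 1) * b := by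
  rcases le_or_gt b ε with h | h
  · have h1 : b ^ ζ ≤ ε ^ ζ := Real.rpow_le_rpow hb h hζ0.le
    have h2 : 0 ≤ ε ^ (ζ - 1) * b := by positivity
    linarith
  · have hb' : 0 < b := hε.trans h
    have h1 : b ^ (ζ - 1) ≤ ε ^ (ζ - 1) :=
      Real.rpow_le_rpow_of_nonpos hε h.le (by linarith)
    have h2 : b ^ ζ = b ^ (ζ - 1) * b := by
      rw [← Real.rpow_add_one hb'.ne' (ζ - 1), sub_add_cancel]
    have h3 : 0 ≤ ε ^ ζ := by positivity
    nlinarith [h1, hb'.le]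

private lemma decay_lemma (γ C D₁ : ℝ) (hγl : 1/2 < γ) (hγu : γ < 1) (hC : 0 < C)
    (hD₁ : 0 < D₁) :
    ∃ K : ℝ, 0 < K ∧ ∀ x : ℕ → ℝ,
      (∀ n, 0 ≤ x n) → (∀ n, x (n+1) ≤ x n) → x 0 ≤ D₁ →
      (∀ n, x (n+1) ≤ C * (x n - x (n+1)) ^ γ) →
      ∀ n : ℕ, x n ≤ K * ((1 : ℝ) + n) ^ (-(γ / (1-γ))) := by
  have hγ0 : 0 < γ := by linarith
  have hγ1 : 0 < 1 - γ := by linarith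
  set μ : ℝ := (1 - γ) / γ with hμdef
  have hμ0 : 0 < μ := by positivity
  have hμ1 : μ < 1 := by rw [hμdef, div_lt_one hγ0]; linarith
  have hβ : 1 / γ = 1 + μ := by rw [hμdef]; field_simp; ring
  have h2C : (0:ℝ) < 2 * C := by linarith
  set c₁ : ℝ := μ / (2 * C) ^ (1 + μ) with hc₁def
  have h2Cp : (0:ℝ) < (2*C) ^ (1+μ) := Real.rpow_pos_of_pos h2C _
  have hc₁ : 0 < c₁ := by rw [hc₁def]; positivity
  set c₂ : ℝ := ((2:ℝ) ^ μ - 1) * D₁ ^ (-μ) with hc₂def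
  have h2μ : (1:ℝ) < (2:ℝ) ^ μ := by
    rw [Real.one_lt_rpow_iff_of_pos (by norm_num)]
    exact Or.inl ⟨by norm_num, hμ0⟩
  have hD₁pos : (0:ℝ) < D₁ ^ (-μ) := Real.rpow_pos_of_pos hD₁ (-μ)
  have hc₂ : 0 < c₂ := mul_pos (by linarith) hD₁pos
  set c : ℝ := min (min c₁ c₂) (D₁ ^ (-μ)) with hcdef
  have hc : 0 < c := lt_min (lt_min hc₁ hc₂) hD₁pos
  refine ⟨c ^ (-(γ / (1-γ))), Real.rpow_pos_of_pos hc _, ?_⟩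
  intro x hx0 hmono hxD hrec
  have hle0 : ∀ m, x m ≤ x 0 := by
    intro m
    induction m with
    | zero => exact le_rfl
    | succ m ih => exact (hmono m).trans ih
  have key : ∀ n : ℕ, 0 < x n → D₁ ^ (-μ) + n * min c₁ c₂ ≤ (x n) ^ (-μ) := by
    intro n
    induction n with
    | zero =>
      intro hpos
      simpa using Real.rpow_le_rpow_of_nonpos hpos hxD (by linarith : -μ ≤ 0)
    | succ n ih =>
      intro hpos
      have hxn : 0 < x n := lt_of_lt_of_le hpos (hmono n)
      have ihn := ih hxn
      have hxnD : x n ≤ D₁ := (hle0 n).trans hxD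
      have hDxn : D₁ ^ (-μ) ≤ (x n) ^ (-μ) :=
        Real.rpow_le_rpow_of_nonpos hxn hxnD (by linarith)
      have step : (x n) ^ (-μ) + min c₁ c₂ ≤ (x (n+1)) ^ (-μ) := by
        rcases le_or_gt (x n) (2 * x (n+1)) with hcase | hcase
        · -- slow case
          set X := x n with hXdef
          set Y := x (n+1) with hYdef
          set d : ℝ := X - Y with hddef
          have hd0 : 0 ≤ d := by rw [hddef]; linarith [hmono n]
          have hXY : Y ≤ X := hmono n
          have h1 : Y ^ (1/γ) ≤ (C * d ^ γ) ^ (1/γ) :=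
            Real.rpow_le_rpow hpos.le (hrec n) (by positivity)
          have h2 : (C * d ^ γ) ^ (1/γ) = C ^ (1/γ) * d := by
            rw [Real.mul_rpow hC.le (Real.rpow_nonneg hd0 γ), ← Real.rpow_mul hd0,
              mul_one_div, div_self hγ0.ne', Real.rpow_one]
          rw [h2, hβ] at h1
          have hP2 : (0:ℝ) < (2:ℝ) ^ (1+μ) := Real.rpow_pos_of_pos two_pos _
          have hPC : (0:ℝ) < C ^ (1+μ) := Real.rpow_pos_of_pos hC _
          have hd1 : (X/2) ^ (1+μ) ≤ Y ^ (1+μ) :=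
            Real.rpow_le_rpow (by positivity) (by linarith) (by positivity)
          have hdlow : X ^ (1+μ) / (2*C) ^ (1+μ) ≤ d := by
            have hfact : ((2*C):ℝ) ^ (1+μ) = (2:ℝ)^(1+μ) * C^(1+μ) :=
              Real.mul_rpow (by norm_num) hC.le
            have h3 : X ^ (1+μ) / (2:ℝ)^(1+μ) ≤ C ^ (1+μ) * d := by
              have h3' := hd1.trans h1
              rwa [Real.div_rpow hxn.le (by norm_num)] at h3'
            rw [hfact, div_le_iff₀ (by positivity)]
            rw [div_le_iff₀ hP2] at h3
            linarith [h3]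
          have hdX : d ≤ X / 2 := by rw [hddef]; linarith
          have ht0 : 0 < Y / X := by positivity
          have hber : (Y/X) ^ μ ≤ 1 - μ * (d/X) := by
            have h4 := bern_upper ht0.le hμ0.le hμ1.le
            have e : Y/X - 1 = -(d/X) := by rw [hddef]; field_simp; ring
            rw [e] at h4
            linarith
          have hdX0 : 0 ≤ d / X := by positivity
          have hz0 : 0 ≤ μ * (d/X) := by positivity
          have h5 : (1 + μ*(d/X)) * (Y/X) ^ μ ≤ (1 + μ*(d/X)) * (1 - μ*(d/X)) :=
            mul_le_mul_of_nonneg_left hber (by linarith)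
          have h5' : (1 + μ*(d/X)) * (1 - μ*(d/X)) ≤ 1 := by
            nlinarith [sq_nonneg (μ*(d/X))]
          have hA : (0:ℝ) < (Y/X) ^ μ := Real.rpow_pos_of_pos ht0 μ
          have h6 : 1 + μ*(d/X) ≤ ((Y/X) ^ μ)⁻¹ := by
            have h7 := mul_le_mul_of_nonneg_right (h5.trans h5') (inv_nonneg.mpr hA.le)
            rwa [mul_assoc, mul_inv_cancel₀ hA.ne', mul_one, one_mul] at h7
          rw [← Real.rpow_neg ht0.le] at h6
          have hYfac : Y ^ (-μ) = X ^ (-μ) * (Y/X) ^ (-μ) := by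
            rw [← Real.mul_rpow hxn.le ht0.le, mul_div_cancel₀ _ hxn.ne']
          have hXpos : (0:ℝ) < X ^ (-μ) := Real.rpow_pos_of_pos hxn _
          have h8 : X ^ (-μ) * (1 + μ*(d/X)) ≤ Y ^ (-μ) := by
            rw [hYfac]
            exact mul_le_mul_of_nonneg_left h6 hXpos.le
          have e2 : X ^ (-μ) / X = (X ^ (1+μ))⁻¹ := by
            rw [← Real.rpow_sub_one hxn.ne' (-μ), show -μ - 1 = -(1+μ) by ring,
              Real.rpow_neg hxn.le]
          have hXp1 : (0:ℝ) < X ^ (1+μ) := Real.rpow_pos_of_pos hxn _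
          have h9 : c₁ ≤ X ^ (-μ) * (μ * (d/X)) := by
            have e3 : μ * (X ^ (1+μ) / (2*C)^(1+μ)) * (X^(1+μ))⁻¹ = c₁ := by
              rw [hc₁def]; field_simp
            calc c₁ = μ * (X ^ (1+μ) / (2*C)^(1+μ)) * (X^(1+μ))⁻¹ := e3.symm
            _ ≤ μ * d * (X^(1+μ))⁻¹ :=
                mul_le_mul_of_nonneg_right (mul_le_mul_of_nonneg_left hdlow hμ0.le)
                  (inv_nonneg.mpr hXp1.le)
            _ = μ * d * (X ^ (-μ) / X) := by rw [e2]
            _ = X ^ (-μ) * (μ * (d/X)) := by ring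
          have hminle : min c₁ c₂ ≤ c₁ := min_le_left _ _
          linarith [h8, h9, hminle]
        · -- fast case
          have h1 : x (n+1) ≤ x n / 2 := by linarith
          have h2 : (x n / 2) ^ (-μ) ≤ x (n+1) ^ (-μ) :=
            Real.rpow_le_rpow_of_nonpos hpos h1 (by linarith)
          have h3 : (x n / 2) ^ (-μ) = x n ^ (-μ) * (2:ℝ) ^ μ := by
            rw [Real.div_rpow hxn.le (by norm_num), Real.rpow_neg (by norm_num : (0:ℝ) ≤ 2),
              div_inv_eq_mul]
          rw [h3] at h2
          have hminle : min c₁ c₂ ≤ c₂ := min_le_right _ _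
          have hXpos : (0:ℝ) < x n ^ (-μ) := Real.rpow_pos_of_pos hxn _
          have h4 : c₂ ≤ ((2:ℝ)^μ - 1) * (x n) ^ (-μ) := by
            rw [hc₂def]
            exact mul_le_mul_of_nonneg_left hDxn (by linarith)
          linarith [h2, h4, hminle]
      have hcast : ((n+1 : ℕ) : ℝ) = (n : ℝ) + 1 := by push_cast; ring
      rw [hcast]
      linarith
  intro n
  rcases le_or_gt (x n) 0 with hle | hpos
  · have h1 : (0:ℝ) < ((1:ℝ)+n) := by positivity
    have h2 := Real.rpow_pos_of_pos h1 (-(γ / (1-γ)))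
    have h3 := Real.rpow_pos_of_pos hc (-(γ / (1-γ)))
    linarith [mul_pos h3 h2, hle]
  · have hkey := key n hpos
    have hcnd : c * (1 + n) ≤ (x n) ^ (-μ) := by
      have h1 : c ≤ D₁ ^ (-μ) := min_le_right _ _
      have h2 : c ≤ min c₁ c₂ := min_le_left _ _
      have hn0 : (0:ℝ) ≤ n := Nat.cast_nonneg n
      linarith [mul_le_mul_of_nonneg_right h2 hn0, h1, hkey]
    have hpos2 : 0 < c * (1 + (n:ℝ)) := by positivity
    have h3 : ((x n) ^ (-μ)) ^ (-(1/μ)) ≤ (c * (1 + (n:ℝ))) ^ (-(1/μ)) :=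
      Real.rpow_le_rpow_of_nonpos hpos2 hcnd (neg_nonpos.mpr (by positivity))
    have h4 : ((x n) ^ (-μ)) ^ (-(1/μ)) = x n := by
      rw [← Real.rpow_mul hpos.le, show -μ * -(1/μ) = 1 by field_simp, Real.rpow_one]
    have h5 : (c * (1 + (n:ℝ))) ^ (-(1/μ)) = c ^ (-(1/μ)) * ((1:ℝ)+n) ^ (-(1/μ)) :=
      Real.mul_rpow hc.le (by positivity)
    have h6 : -(1/μ) = -(γ / (1-γ)) := by rw [hμdef, one_div_div]
    rw [h4, h5, h6] at h3
    exact h3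

private lemma summable_shift (e : ℝ) (he : e < -1) :
    Summable (fun n : ℕ => ((1:ℝ) + n) ^ e) := by
  have h := Real.summable_nat_rpow.mpr he
  have h2 := (summable_nat_add_iff 1).mpr h
  apply h2.congr
  intro n
  push_cast
  rw [add_comm]

private lemma summable_lemma (p K ζ : ℝ) (hp : 1 < p) (hK : 0 < K)
    (hζl : 1 / (1 + p) < ζ) (hζu : ζ < 1)
    (x : ℕ → ℝ) (hx0 : ∀ n, 0 ≤ x n) (hmono : ∀ n, x (n+1) ≤ x n)
    (hdec : ∀ n : ℕ, x n ≤ K * ((1:ℝ) + n) ^ (-p)) :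
    Summable (fun n : ℕ => (x n - x (n+2)) ^ ζ) := by
  have h1p : (0:ℝ) < 1 + p := by linarith
  have hζ0 : 0 < ζ := lt_trans (by positivity) hζl
  have hζ1 : (0:ℝ) < 1 - ζ := by linarith
  have hζp : 1 < ζ * (1 + p) := (div_lt_iff₀ h1p).mp hζl
  have hq' : (1 - ζ)/ζ < p := by
    rw [div_lt_iff₀ hζ0]; nlinarith
  set M : ℝ := max 1 ((1-ζ)/ζ) with hMdef
  have hM1 : 1 ≤ M := le_max_left _ _
  have hMz : (1-ζ)/ζ ≤ M := le_max_right _ _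
  have hMp : M < p := max_lt hp hq'
  set q : ℝ := (M + p)/2 with hqdef
  have hq1 : 1 ≤ q := by rw [hqdef]; linarith
  have hq2 : (1-ζ)/ζ < q := by rw [hqdef]; linarith
  have hq3 : q < p := by rw [hqdef]; linarith
  have hq0 : 0 < q := by linarith
  -- difference nonneg
  have hb0 : ∀ n : ℕ, 0 ≤ x n - x (n+2) := by
    intro n
    have h1 : x (n+2) ≤ x (n+1) := hmono (n+1)
    have h2 : x (n+1) ≤ x n := hmono n
    linarith
  -- the weighted series
  have hS0 : Summable (fun i : ℕ => ((1:ℝ) + i) ^ (q-1-p)) :=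
    summable_shift _ (by linarith)
  set S0 : ℝ := ∑' i : ℕ, ((1:ℝ) + i) ^ (q-1-p) with hS0def
  have hS0nn : 0 ≤ S0 := tsum_nonneg (fun i => Real.rpow_nonneg (by positivity) _)
  set a : ℕ → ℝ := fun n => ((1:ℝ) + n) ^ q with hadef
  have ha0 : ∀ n : ℕ, 0 < a n := fun n => Real.rpow_pos_of_pos (by positivity) _
  have hamono : ∀ n : ℕ, a n ≤ a (n+1) := by
    intro n
    apply Real.rpow_le_rpow (by positivity) _ hq0.le
    push_cast; linarith
  have hc0 : ∀ n : ℕ, 0 ≤ x n - x (n+1) := fun n => by linarith [hmono n]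
  -- Abel bound for T_N
  have hT : ∀ N : ℕ, ∑ i ∈ Finset.range N, a i * (x i - x (i+1)) ≤ K + q*K*S0 := by
    intro N
    have hsplit : ∀ i : ℕ, a i * (x i - x (i+1))
        = (x i * a i - x (i+1) * a (i+1)) + x (i+1) * (a (i+1) - a i) := by
      intro i; ring
    rw [Finset.sum_congr rfl (fun i _ => hsplit i), Finset.sum_add_distrib,
      Finset.sum_range_sub' (fun i => x i * a i)]
    have hfN : 0 ≤ x N * a N := mul_nonneg (hx0 N) (ha0 N).le
    have hf0 : x 0 * a 0 ≤ K := by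
      have ha0' : a 0 = 1 := by
        simp only [hadef]; norm_num
      have := hdec 0
      simp only [Nat.cast_zero, add_zero] at this
      rw [Real.rpow_neg (by norm_num), Real.one_rpow] at this
      simp only [ha0', mul_one]
      simpa using this
    have hsum2 : ∑ i ∈ Finset.range N, x (i+1) * (a (i+1) - a i)
        ≤ ∑ i ∈ Finset.range N, q*K*((1:ℝ)+i)^(q-1-p) := by
      apply Finset.sum_le_sum
      intro i _
      have hpos2 : (0:ℝ) < (2:ℝ) + i := by positivity
      have hpos1 : (0:ℝ) < (1:ℝ) + i := by positivity
      have hai1 : a (i+1) = ((2:ℝ)+i) ^ q := by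
        simp only [hadef]; push_cast; ring_nf
      have hai : a i = ((1:ℝ)+i) ^ q := rfl
      have bound1 : a (i+1) - a i ≤ q * ((2:ℝ)+i)^(q-1) := by
        rw [hai1, hai]
        have := rpow_diff_le (u := (2:ℝ)+i) (v := (1:ℝ)+i) hpos1 (by linarith) hq1
        calc ((2:ℝ)+i)^q - ((1:ℝ)+i)^q ≤ q * ((2:ℝ)+i)^(q-1) * (((2:ℝ)+i) - ((1:ℝ)+i)) := this
        _ = q * ((2:ℝ)+i)^(q-1) := by ring_nf
      have bound2 : 0 ≤ a (i+1) - a i := by linarith [hamono i]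
      have bound3 : x (i+1) ≤ K * ((2:ℝ)+i)^(-p) := by
        have := hdec (i+1)
        have e : ((1:ℝ) + ((i+1:ℕ):ℝ)) = (2:ℝ)+i := by push_cast; ring
        rwa [e] at this
      have hKp : (0:ℝ) ≤ K * ((2:ℝ)+i)^(-p) := by positivity
      calc x (i+1) * (a (i+1) - a i)
          ≤ (K * ((2:ℝ)+i)^(-p)) * (a (i+1) - a i) :=
            mul_le_mul_of_nonneg_right bound3 bound2
        _ ≤ (K * ((2:ℝ)+i)^(-p)) * (q * ((2:ℝ)+i)^(q-1)) :=
            mul_le_mul_of_nonneg_left bound1 hKp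
        _ = q*K*(((2:ℝ)+i)^(-p) * ((2:ℝ)+i)^(q-1)) := by ring
        _ = q*K*((2:ℝ)+i)^(q-1-p) := by
            rw [← Real.rpow_add hpos2, show -p + (q-1) = q-1-p by ring]
        _ ≤ q*K*((1:ℝ)+i)^(q-1-p) := by
            apply mul_le_mul_of_nonneg_left _ (by positivity)
            exact Real.rpow_le_rpow_of_nonpos hpos1 (by linarith) (by linarith)
    have hsum3 : ∑ i ∈ Finset.range N, q*K*((1:ℝ)+i)^(q-1-p) ≤ q*K*S0 := by
      rw [← Finset.mul_sum]
      apply mul_le_mul_of_nonneg_left _ (by positivity)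
      exact Summable.sum_le_tsum (Finset.range N) (fun i _ => Real.rpow_nonneg (by positivity) _) hS0
    linarith
  -- summability of the weighted series
  have hS2 : Summable (fun n : ℕ => a n * (x n - x (n+2))) := by
    apply summable_of_sum_range_le
      (c := 2*(K + q*K*S0))
    · intro n; exact mul_nonneg (ha0 n).le (hb0 n)
    · intro N
      have hpt : ∀ i : ℕ, a i * (x i - x (i+2))
          ≤ a i * (x i - x (i+1)) + a (i+1) * (x (i+1) - x (i+2)) := by
        intro i
        have h1 : a i * (x (i+1) - x (i+2)) ≤ a (i+1) * (x (i+1) - x (i+2)) :=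
          mul_le_mul_of_nonneg_right (hamono i) (hc0 (i+1))
        nlinarith [h1]
      have h2 : ∑ i ∈ Finset.range N, a i * (x i - x (i+2))
          ≤ ∑ i ∈ Finset.range N, (a i * (x i - x (i+1)) + a (i+1) * (x (i+1) - x (i+2))) :=
        Finset.sum_le_sum (fun i _ => hpt i)
      rw [Finset.sum_add_distrib] at h2
      have h3 := Finset.sum_range_succ' (fun i => a i * (x i - x (i+1))) N
      -- h3 : ∑ i in range (N+1), f i = (∑ i in range N, f (i+1)) + f 0
      have h4 : ∑ i ∈ Finset.range N, a (i+1) * (x (i+1) - x (i+1+1))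
          ≤ K + q*K*S0 := by
        have h5 := hT (N+1)
        have h6 : 0 ≤ a 0 * (x 0 - x 1) := mul_nonneg (ha0 0).le (hc0 0)
        rw [h3] at h5
        linarith
      have h7 := hT N
      calc ∑ i ∈ Finset.range N, a i * (x i - x (i+2))
          ≤ (∑ i ∈ Finset.range N, a i * (x i - x (i+1)))
            + ∑ i ∈ Finset.range N, a (i+1) * (x (i+1) - x (i+2)) := h2
        _ ≤ 2*(K + q*K*S0) := by
            have : ∀ i:ℕ, x (i+1) - x (i+2) = x (i+1) - x (i+1+1) := by intro i; norm_num
            simp only [this] at *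
            linarith
  -- the epsilon trick majorant
  have hexp : -(q*ζ/(1-ζ)) < -1 := by
    rw [neg_lt_neg_iff, lt_div_iff₀ hζ1]
    have := (div_lt_iff₀ hζ0).mp hq2
    linarith
  have hS1 : Summable (fun n : ℕ => ((1:ℝ)+n) ^ (-(q*ζ/(1-ζ)))) := summable_shift _ hexp
  refine Summable.of_nonneg_of_le (fun n => Real.rpow_nonneg (hb0 n) ζ) ?_ (hS1.add hS2)
  intro n
  have hxpos : (0:ℝ) < (1:ℝ)+n := by positivity
  have hε : (0:ℝ) < ((1:ℝ)+n) ^ (-(q/(1-ζ))) := Real.rpow_pos_of_pos hxpos _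
  have h1 := eps_trick (hb0 n) hε hζ0 hζu
  have e1 : (((1:ℝ)+n) ^ (-(q/(1-ζ)))) ^ ζ = ((1:ℝ)+n) ^ (-(q*ζ/(1-ζ))) := by
    rw [← Real.rpow_mul hxpos.le, show -(q/(1-ζ))*ζ = -(q*ζ/(1-ζ)) by ring]
  have e2 : (((1:ℝ)+n) ^ (-(q/(1-ζ)))) ^ (ζ-1) = a n := by
    rw [← Real.rpow_mul hxpos.le, show -(q/(1-ζ))*(ζ-1) = q by field_simp; ring]
  rw [e1, e2] at h1
  exact h1

/-- Continuous-time Lojasiewicz iteration: a nondecreasing bounded function `w` on `[s₀,∞)`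
with supremum `Θ` satisfying `Θ - w(s) ≤ C (w(s+a) - w(s-a))^γ` decays polynomially, with a
constant depending only on `γ`, `a`, `C` and `Θ - w(s₀)`, and for every `ζ ∈ (1-γ, 1)` the
integral `∫_{s₀+a}^∞ (w(s'+a) - w(s'-a))^ζ ds'` is finite. -/
theorem stmt_10 (γ a C D : ℝ) (hγ : γ ∈ Set.Ioo (1 / 2 : ℝ) 1) (ha : 0 < a) (hC : 0 < C) :
    ∃ C' : ℝ, ∀ (s₀ : ℝ) (w : ℝ → ℝ) (Θ : ℝ),
      MonotoneOn w (Set.Ici s₀) →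
      IsLUB (w '' Set.Ici s₀) Θ →
      Θ - w s₀ ≤ D →
      (∀ s, s₀ + a ≤ s → Θ - w s ≤ C * (w (s + a) - w (s - a)) ^ γ) →
      (∀ s, s₀ + a ≤ s → Θ - w s ≤ C' * (1 + s - s₀) ^ (-(γ / (1 - γ)))) ∧
        ∀ ζ ∈ Set.Ioo (1 - γ) 1,
          MeasureTheory.IntegrableOn (fun s' => (w (s' + a) - w (s' - a)) ^ ζ)
            (Set.Ici (s₀ + a)) := by
  obtain ⟨hγl, hγu⟩ := hγ
  have hγ0 : (0:ℝ) < γ := by linarith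
  have hγ1 : (0:ℝ) < 1 - γ := by linarith
  set D₁ : ℝ := max D 1 with hD₁def
  have hD₁ : 0 < D₁ := lt_of_lt_of_le one_pos (le_max_right _ _)
  obtain ⟨K, hK, hKspec⟩ := decay_lemma γ C D₁ hγl hγu hC hD₁
  set p : ℝ := γ/(1-γ) with hpdef
  have hp1 : 1 < p := by rw [hpdef, lt_div_iff₀ hγ1]; linarith
  have hp0 : 0 < p := by linarith
  have h12a : (0:ℝ) < 1 + 2*a := by linarith
  refine ⟨K * (1+2*a) ^ p, ?_⟩
  intro s₀ w Θ hw hlub hD0 hrec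
  set X : ℕ → ℝ := fun n => Θ - w (s₀ + 2*n*a) with hXdef
  have hub : ∀ t, s₀ ≤ t → w t ≤ Θ := fun t ht => hlub.1 ⟨t, ht, rfl⟩
  have hmemn : ∀ n : ℕ, s₀ ≤ s₀ + 2*n*a := by
    intro n
    have hn : (0:ℝ) ≤ (n:ℝ) := n.cast_nonneg
    nlinarith
  have hX0 : ∀ n, 0 ≤ X n := by
    intro n
    simp only [hXdef]
    linarith [hub _ (hmemn n)]
  have hXmono : ∀ n, X (n+1) ≤ X n := by
    intro n
    simp only [hXdef]
    have hn : (0:ℝ) ≤ (n:ℝ) := n.cast_nonneg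
    have h1 : w (s₀ + 2*(n:ℕ)*a) ≤ w (s₀ + 2*((n+1:ℕ))*a) :=
      hw (hmemn n) (hmemn (n+1)) (by push_cast; nlinarith)
    linarith
  have hX0D : X 0 ≤ D₁ := by
    have e : X 0 = Θ - w s₀ := by simp [hXdef]
    rw [e]
    exact hD0.trans (le_max_left _ _)
  have hXrec : ∀ n, X (n+1) ≤ C * (X n - X (n+1)) ^ γ := by
    intro n
    have hn : (0:ℝ) ≤ (n:ℝ) := n.cast_nonneg
    have hs : s₀ + a ≤ s₀ + (2*n+1)*a := by nlinarith
    have h := hrec (s₀ + (2*(n:ℝ)+1)*a) hs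
    have e1 : s₀ + (2*(n:ℝ)+1)*a + a = s₀ + 2*((n+1:ℕ):ℝ)*a := by push_cast; ring
    have e2 : s₀ + (2*(n:ℝ)+1)*a - a = s₀ + 2*((n:ℕ):ℝ)*a := by push_cast; ring
    rw [e1, e2] at h
    have h2 : w (s₀ + (2*(n:ℝ)+1)*a) ≤ w (s₀ + 2*((n+1:ℕ):ℝ)*a) := by
      apply hw _ (hmemn (n+1)) _
      · have h0 : (0:ℝ) ≤ (2*(n:ℝ)+1)*a := by nlinarith
        exact mem_Ici.mpr (by linarith)
      · push_cast; nlinarith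
    have h3 : X (n+1) ≤ Θ - w (s₀ + (2*(n:ℝ)+1)*a) := by
      simp only [hXdef]; linarith
    have h4 : w (s₀ + 2*((n+1:ℕ):ℝ)*a) - w (s₀ + 2*((n:ℕ):ℝ)*a) = X n - X (n+1) := by
      simp only [hXdef]; ring
    rw [h4] at h
    linarith
  have hXdec := hKspec X hX0 hXmono hX0D hXrec
  have h2a : (0:ℝ) < 2*a := by linarith
  constructor
  · -- part 1 : polynomial decay
    intro s hs
    have hss₀ : s₀ < s := by linarith
    have hnn : (0:ℝ) ≤ (s - s₀)/(2*a) := by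
      apply div_nonneg _ h2a.le
      linarith
    set n : ℕ := ⌊(s - s₀)/(2*a)⌋₊ with hndef
    have hfl : (n:ℝ) ≤ (s - s₀)/(2*a) := Nat.floor_le hnn
    have hfl2 : (s - s₀)/(2*a) < n + 1 := Nat.lt_floor_add_one _
    have h1 : s₀ + 2*(n:ℝ)*a ≤ s := by
      have := (le_div_iff₀ h2a).mp hfl
      nlinarith
    have h2 : s - s₀ < 2*((n:ℝ)+1)*a := by
      have := (div_lt_iff₀ h2a).mp hfl2
      nlinarith
    have h3 : Θ - w s ≤ X n := by
      simp only [hXdef]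
      have := hw (hmemn n) (le_of_lt hss₀) h1
      linarith
    have h4 := hXdec n
    have h5 : (0:ℝ) < 1 + s - s₀ := by linarith
    have hn0 : (0:ℝ) ≤ (n:ℝ) := n.cast_nonneg
    have h6 : 1 + s - s₀ ≤ (1+2*a)*(1+(n:ℝ)) := by nlinarith
    have h7 : ((1+2*a)*(1+(n:ℝ))) ^ (-p) ≤ (1+s-s₀) ^ (-p) :=
      Real.rpow_le_rpow_of_nonpos h5 h6 (neg_nonpos.mpr hp0.le)
    have h8 : ((1+2*a)*(1+(n:ℝ))) ^ (-p) = (1+2*a)^(-p) * (1+(n:ℝ))^(-p) :=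
      Real.mul_rpow h12a.le (by positivity)
    have hpos : (0:ℝ) < (1+2*a)^p := Real.rpow_pos_of_pos h12a _
    have h9 : (1+(n:ℝ))^(-p) ≤ (1+2*a)^p * (1+s-s₀)^(-p) := by
      have e : (1+2*a)^p * ((1+2*a)^(-p) * (1+(n:ℝ))^(-p)) = (1+(n:ℝ))^(-p) := by
        rw [← mul_assoc, ← Real.rpow_add h12a, add_neg_cancel, Real.rpow_zero, one_mul]
      calc (1+(n:ℝ))^(-p) = (1+2*a)^p * (((1+2*a)*(1+(n:ℝ)))^(-p)) := by rw [h8, e]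
      _ ≤ (1+2*a)^p * (1+s-s₀)^(-p) := mul_le_mul_of_nonneg_left h7 hpos.le
    calc Θ - w s ≤ X n := h3
    _ ≤ K * (1+(n:ℝ))^(-p) := h4
    _ ≤ K * ((1+2*a)^p * (1+s-s₀)^(-p)) := mul_le_mul_of_nonneg_left h9 hK.le
    _ = K * (1+2*a)^p * (1+s-s₀)^(-p) := by ring
  · -- part 2 : integrability
    intro ζ hζ
    obtain ⟨hζl, hζu⟩ := hζ
    have hζ0 : (0:ℝ) < ζ := by linarith
    have hζl' : 1/(1+p) < ζ := by
      have e : 1 + p = 1/(1-γ) := by rw [hpdef]; field_simp; ring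
      rw [e, one_div_one_div]
      exact hζl
    have hsumm := summable_lemma p K ζ hp1 hK hζl' hζu X hX0 hXmono hXdec
    have hXb0 : ∀ n : ℕ, 0 ≤ X n - X (n+2) := by
      intro n
      have h1 := hXmono (n+1)
      have h2 := hXmono n
      linarith
    set T₀ : ℝ := s₀ + a with hT₀def
    set W : ℝ → ℝ := fun t => w (max t s₀) with hWdef
    have hWmono : Monotone W := by
      intro u v huv
      exact hw (mem_Ici.mpr (le_max_right _ _)) (mem_Ici.mpr (le_max_right _ _)) (max_le_max huv le_rfl)
    have hm1 : Monotone (fun s : ℝ => W (s+a)) := fun u v h => hWmono (by linarith)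
    have hm2 : Monotone (fun s : ℝ => W (s-a)) := fun u v h => hWmono (by linarith)
    have hgmeas : Measurable fun s' : ℝ => W (s'+a) - W (s'-a) :=
      hm1.measurable.sub hm2.measurable
    have hFmeas : Measurable fun s' : ℝ => (W (s'+a) - W (s'-a)) ^ ζ :=
      hgmeas.pow measurable_const
    have hg0 : ∀ s : ℝ, 0 ≤ W (s+a) - W (s-a) := by
      intro s
      have := hWmono (show s - a ≤ s + a by linarith)
      linarith
    have hEq : EqOn (fun s' => (w (s'+a) - w (s'-a)) ^ ζ)
        (fun s' => (W (s'+a) - W (s'-a)) ^ ζ) (Ici T₀) := by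
      intro s hsmem
      simp only [hWdef]
      rw [max_eq_left (show s₀ ≤ s + a by simp only [mem_Ici, hT₀def] at hsmem; linarith),
        max_eq_left (show s₀ ≤ s - a by simp only [mem_Ici, hT₀def] at hsmem; linarith)]
    rw [integrableOn_congr_fun hEq measurableSet_Ici]
    refine ⟨hFmeas.aestronglyMeasurable.restrict, ?_⟩
    rw [hasFiniteIntegral_iff_ofReal
      (Filter.Eventually.of_forall (fun s => Real.rpow_nonneg (hg0 s) ζ))]
    have hcover : Ici T₀ ⊆ ⋃ n : ℕ, Ico (T₀ + 2*(n:ℝ)*a) (T₀ + 2*((n:ℝ)+1)*a) := by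
      intro s hsmem
      simp only [mem_Ici] at hsmem
      simp only [mem_iUnion, mem_Ico]
      have hnn : (0:ℝ) ≤ (s - T₀)/(2*a) := div_nonneg (by linarith) h2a.le
      refine ⟨⌊(s - T₀)/(2*a)⌋₊, ?_, ?_⟩
      · have := (le_div_iff₀ h2a).mp (Nat.floor_le hnn)
        nlinarith
      · have := (div_lt_iff₀ h2a).mp (Nat.lt_floor_add_one ((s - T₀)/(2*a)))
        nlinarith
    calc ∫⁻ s in Ici T₀, ENNReal.ofReal ((W (s+a) - W (s-a)) ^ ζ)
        ≤ ∫⁻ s in ⋃ n : ℕ, Ico (T₀ + 2*(n:ℝ)*a) (T₀ + 2*((n:ℝ)+1)*a),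
            ENNReal.ofReal ((W (s+a) - W (s-a)) ^ ζ) := lintegral_mono_set hcover
    _ ≤ ∑' n : ℕ, ∫⁻ s in Ico (T₀ + 2*(n:ℝ)*a) (T₀ + 2*((n:ℝ)+1)*a),
            ENNReal.ofReal ((W (s+a) - W (s-a)) ^ ζ) := lintegral_iUnion_le _ _
    _ ≤ ∑' n : ℕ, ENNReal.ofReal ((X n - X (n+2))^ζ) * ENNReal.ofReal (2*a) := by
        apply ENNReal.tsum_le_tsum
        intro n
        have hbnd : ∀ s ∈ Ico (T₀ + 2*(n:ℝ)*a) (T₀ + 2*((n:ℝ)+1)*a),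
            ENNReal.ofReal ((W (s+a) - W (s-a)) ^ ζ)
              ≤ ENNReal.ofReal ((X n - X (n+2))^ζ) := by
          intro s hsmem
          obtain ⟨hs1, hs2⟩ := hsmem
          apply ENNReal.ofReal_le_ofReal
          have hn : (0:ℝ) ≤ (n:ℝ) := n.cast_nonneg
          have e1 : W (s+a) ≤ w (s₀ + 2*((n+2:ℕ):ℝ)*a) := by
            simp only [hWdef]
            apply hw (mem_Ici.mpr (le_max_right _ _)) (hmemn (n+2))
            apply max_le _ (hmemn (n+2))
            simp only [hT₀def] at hs2
            push_cast
            nlinarith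
          have e2 : w (s₀ + 2*((n:ℕ):ℝ)*a) ≤ W (s-a) := by
            simp only [hWdef]
            apply hw (hmemn n) (mem_Ici.mpr (le_max_right _ _))
            apply le_trans _ (le_max_left _ _)
            simp only [hT₀def] at hs1
            linarith
          have hgs : W (s+a) - W (s-a) ≤ X n - X (n+2) := by
            simp only [hXdef]
            push_cast at e1 ⊢
            linarith
          exact Real.rpow_le_rpow (hg0 s) hgs hζ0.le
        calc ∫⁻ s in Ico (T₀ + 2*(n:ℝ)*a) (T₀ + 2*((n:ℝ)+1)*a),
              ENNReal.ofReal ((W (s+a) - W (s-a)) ^ ζ)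
            ≤ ∫⁻ _ in Ico (T₀ + 2*(n:ℝ)*a) (T₀ + 2*((n:ℝ)+1)*a),
              ENNReal.ofReal ((X n - X (n+2))^ζ) :=
              setLIntegral_mono' measurableSet_Ico hbnd
        _ = ENNReal.ofReal ((X n - X (n+2))^ζ)
              * volume (Ico (T₀ + 2*(n:ℝ)*a) (T₀ + 2*((n:ℝ)+1)*a)) :=
              setLIntegral_const _ _
        _ = ENNReal.ofReal ((X n - X (n+2))^ζ) * ENNReal.ofReal (2*a) := by
              rw [Real.volume_Ico]
              congr 1
              ring
    _ = (∑' n : ℕ, ENNReal.ofReal ((X n - X (n+2))^ζ)) * ENNReal.ofReal (2*a) :=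
        ENNReal.tsum_mul_right
    _ < ⊤ := by
        rw [← ENNReal.ofReal_tsum_of_nonneg (fun n => Real.rpow_nonneg (hXb0 n) ζ) hsumm]
        exact ENNReal.mul_lt_top ENNReal.ofReal_lt_top ENNReal.ofReal_lt_top
end
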